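/- Let β ∈ [0,1), λ = 1−β, and let n satisfy Assumption 1 with δ* > λ. Then the mean clone size converges: lim_{t→∞} E(Y_t) = δ*/(δ*−λ), where E(Y_t) = e^{λt}·(∫_0^t n_τ e^{−λτ} dτ)/(∫_0^t n_τ dτ). -/

import Mathlib

open Filter Real intervalIntegral
open MeasureTheory Set

/-- Assumption 1 on the wild-type growth function `n`. -/
def Assumption1 (n : ℝ → ℝ) : Prop :=
  (∀ τ : ℝ, τ < 0 → n τ = 0) ∧
  ContinuousOn n (Set.Ioi 0) ∧
  Filter.Tendsto n (nhdsWithin 0 (Set.Ioi 0)) (nhds (n 0)) ∧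
  (∀ τ : ℝ, 0 < τ → 0 < n τ) ∧
  MonotoneOn n (Set.Ioi 0) ∧
  (∀ x : ℝ, 0 ≤ x → ∃ L : ℝ, 0 < L ∧
    Filter.Tendsto (fun t : ℝ => n (t - x) / n t) Filter.atTop (nhds L))

lemma A1.mono {n : ℝ → ℝ} (hn : Assumption1 n) : Monotone n := by
  obtain ⟨h0, hc, hr, hp, hm, hl⟩ := hn
  have h00 : 0 ≤ n 0 := ge_of_tendsto hr (by
    filter_upwards [self_mem_nhdsWithin] with u hu using (hp u hu).le)
  have h0le : ∀ b : ℝ, 0 < b → n 0 ≤ n b := by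
    intro b hb
    refine le_of_tendsto hr ?_
    filter_upwards [Ioo_mem_nhdsGT_of_mem (by simp [hb] : (0:ℝ) ∈ Ico 0 b)] with u hu
    exact hm hu.1 hb hu.2.le
  intro a b hab
  rcases lt_trichotomy a 0 with ha | ha | ha
  · rw [h0 a ha]
    rcases lt_trichotomy b 0 with hb | hb | hb
    · rw [h0 b hb]
    · rw [hb]; exact h00
    · exact (hp b hb).le
  · subst ha
    rcases eq_or_lt_of_le hab with rfl | hb
    · exact le_rfl
    · exact h0le b hb
  · exact hm ha (lt_of_lt_of_le ha hab) hab

lemma A1.nonneg {n : ℝ → ℝ} (hn : Assumption1 n) (t : ℝ) : 0 ≤ n t := by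
  rcases lt_trichotomy t 0 with h | h | h
  · rw [hn.1 t h]
  · subst h
    have h1 := A1.mono hn (show (-1:ℝ) ≤ 0 by norm_num)
    rwa [hn.1 (-1) (by norm_num)] at h1
  · exact (hn.2.2.2.1 t h).le

lemma A1.lower {n : ℝ → ℝ} {δ : ℝ} (hn : Assumption1 n)
    (hδlim : Tendsto (fun t : ℝ => Real.log (n t) / t) atTop (nhds δ))
    {κ : ℝ} (hκ : κ < δ) : ∀ᶠ t in atTop, Real.exp (κ * t) ≤ n t := by
  have h1 : ∀ᶠ t in atTop, κ < Real.log (n t) / t := by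
    have := hδlim.eventually (eventually_gt_nhds hκ)
    exact this
  filter_upwards [h1, eventually_gt_atTop 0] with t ht htpos
  have hlog : κ * t ≤ Real.log (n t) := by
    rw [lt_div_iff₀ htpos] at ht
    linarith
  calc Real.exp (κ * t) ≤ Real.exp (Real.log (n t)) := Real.exp_le_exp.2 hlog
    _ = n t := Real.exp_log (hn.2.2.2.1 t htpos)

lemma A1.ratio {n : ℝ → ℝ} {δ : ℝ} (hn : Assumption1 n)
    (hδlim : Tendsto (fun t : ℝ => Real.log (n t) / t) atTop (nhds δ))
    {x : ℝ} (hx : 0 ≤ x) :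
    Tendsto (fun t : ℝ => n (t - x) / n t) atTop (nhds (Real.exp (-(δ * x)))) := by
  rcases eq_or_lt_of_le hx with rfl | hx
  · simp only [sub_zero, mul_zero, neg_zero, Real.exp_zero]
    refine Tendsto.congr' ?_ tendsto_const_nhds
    filter_upwards [eventually_gt_atTop 0] with t ht
    rw [div_self (hn.2.2.2.1 t ht).ne']
  obtain ⟨L, hL, hLt⟩ := hn.2.2.2.2.2 x hx.le
  suffices hLe : L = Real.exp (-(δ * x)) by rw [← hLe]; exact hLt
  -- telescoping / Cesàro argument
  have hpos : ∀ k : ℕ, 0 < n (1 + k * x) := fun k =>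
    hn.2.2.2.1 _ (by positivity)
  set f : ℕ → ℝ := fun k => Real.log (n (1 + k * x)) with hf
  have htm : Tendsto (fun m : ℕ => 1 + ((m : ℝ) + 1) * x) atTop atTop := by
    apply tendsto_atTop_add_const_left
    exact Tendsto.atTop_mul_const hx (tendsto_natCast_atTop_atTop.atTop_add tendsto_const_nhds)
  have hu : Tendsto (fun k : ℕ => f (k + 1) - f k) atTop (nhds (- Real.log L)) := by
    have h1 : Tendsto (fun k : ℕ => n ((1 + ((k : ℝ) + 1) * x) - x) / n (1 + ((k : ℝ) + 1) * x))
        atTop (nhds L) := hLt.comp htm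
    have h2 : Tendsto (fun k : ℕ => Real.log (n ((1 + ((k : ℝ) + 1) * x) - x) / n (1 + ((k : ℝ) + 1) * x)))
        atTop (nhds (Real.log L)) := (Real.continuousAt_log hL.ne').tendsto.comp h1
    have h3 : ∀ k : ℕ, Real.log (n ((1 + ((k : ℝ) + 1) * x) - x) / n (1 + ((k : ℝ) + 1) * x))
        = -(f (k + 1) - f k) := by
      intro k
      have e1 : (1 + ((k : ℝ) + 1) * x) - x = 1 + (k : ℝ) * x := by ring
      rw [e1, Real.log_div (hpos k).ne' (by exact_mod_cast (hpos (k + 1)).ne' : n (1 + (((k:ℝ)+1)) * x) ≠ 0)]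
      simp only [hf]
      push_cast
      ring
    rw [show - Real.log L = -(Real.log L) by ring]
    have h4 := h2.neg
    refine h4.congr fun k => ?_
    rw [h3 k]; ring
  -- Cesàro
  have hc := hu.cesaro
  have hsum : ∀ m : ℕ, ∑ i ∈ Finset.range m, (f (i + 1) - f i) = f m - f 0 :=
    fun m => Finset.sum_range_sub f m
  have hc2 : Tendsto (fun m : ℕ => ((m : ℝ))⁻¹ * (f m - f 0)) atTop (nhds (- Real.log L)) := by
    refine hc.congr fun m => ?_
    rw [hsum m]
  -- other expression for limit
  have htm2 : Tendsto (fun m : ℕ => 1 + (m : ℝ) * x) atTop atTop := by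
    apply tendsto_atTop_add_const_left
    exact Tendsto.atTop_mul_const hx tendsto_natCast_atTop_atTop
  have hg : Tendsto (fun m : ℕ => f m / (1 + (m : ℝ) * x)) atTop (nhds δ) := hδlim.comp htm2
  have hrat : Tendsto (fun m : ℕ => (1 + (m : ℝ) * x) / m) atTop (nhds x) := by
    have : Tendsto (fun m : ℕ => ((m : ℝ))⁻¹ + x) atTop (nhds (0 + x)) :=
      ((tendsto_inv_atTop_nhds_zero_nat (𝕜 := ℝ)).add tendsto_const_nhds)
    rw [zero_add] at this
    refine this.congr' ?_
    filter_upwards [eventually_gt_atTop 0] with m hm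
    have hm' : (m : ℝ) ≠ 0 := by positivity
    field_simp
  have hc3 : Tendsto (fun m : ℕ => ((m : ℝ))⁻¹ * (f m - f 0)) atTop (nhds (δ * x)) := by
    have h5 : Tendsto (fun m : ℕ => f m / (1 + (m : ℝ) * x) * ((1 + (m : ℝ) * x) / m)
        - f 0 * ((m : ℝ))⁻¹) atTop (nhds (δ * x - f 0 * 0)) :=
      (hg.mul hrat).sub (tendsto_const_nhds.mul (tendsto_inv_atTop_nhds_zero_nat (𝕜 := ℝ)))
    rw [mul_zero, sub_zero] at h5
    refine h5.congr' ?_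
    filter_upwards [eventually_gt_atTop 0] with m hm
    have hm' : (m : ℝ) ≠ 0 := by positivity
    have hx' : (1 : ℝ) + (m : ℝ) * x ≠ 0 := by positivity
    field_simp
  have := tendsto_nhds_unique hc2 hc3
  have hlogL : Real.log L = -(δ * x) := by linarith
  rw [← Real.exp_log hL, hlogL]

lemma A1.step {n : ℝ → ℝ} {κ T₀ : ℝ} (hn : Assumption1 n)
    (hT₀ : ∀ u : ℝ, T₀ ≤ u → n (u - 1) ≤ Real.exp (-κ) * n u) :
    ∀ k : ℕ, ∀ t : ℝ, T₀ + k ≤ t → n (t - k) ≤ Real.exp (-(κ * k)) * n t := by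
  intro k
  induction k with
  | zero => intro t ht; simp
  | succ k ih =>
    intro t ht
    push_cast at ht
    have h1 : T₀ + (k : ℝ) ≤ t - 1 := by linarith
    have h2 := ih (t - 1) h1
    have h3 := hT₀ t (by nlinarith [Nat.cast_nonneg (α := ℝ) k])
    have e1 : t - ((k : ℕ) + 1 : ℕ) = (t - 1) - (k : ℕ) := by push_cast; ring
    calc n (t - ((k : ℕ) + 1 : ℕ)) = n ((t - 1) - (k : ℕ)) := by rw [e1]
      _ ≤ Real.exp (-(κ * k)) * n (t - 1) := h2
      _ ≤ Real.exp (-(κ * k)) * (Real.exp (-κ) * n t) := by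
          exact mul_le_mul_of_nonneg_left h3 (Real.exp_nonneg _)
      _ = Real.exp (-(κ * ((k : ℕ) + 1 : ℕ))) * n t := by
          rw [← mul_assoc, ← Real.exp_add]; push_cast; ring_nf

lemma A1.dom {n : ℝ → ℝ} {δ : ℝ} (hn : Assumption1 n)
    (hδlim : Tendsto (fun t : ℝ => Real.log (n t) / t) atTop (nhds δ))
    {κ : ℝ} (hκ0 : 0 < κ) (hκδ : κ < δ) :
    ∃ C : ℝ, 0 < C ∧ ∃ T : ℝ, 1 ≤ T ∧ ∀ t : ℝ, T ≤ t → ∀ s : ℝ, 0 ≤ s →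
      n (t - s) ≤ C * Real.exp (-(κ * s)) * n t := by
  have hr := A1.ratio hn hδlim (x := 1) zero_le_one
  have hlt : Real.exp (-(δ * 1)) < Real.exp (-κ) := by
    rw [Real.exp_lt_exp]; linarith
  have hev : ∀ᶠ t : ℝ in atTop, n (t - 1) / n t ≤ Real.exp (-κ) :=
    hr.eventually (eventually_le_nhds hlt)
  obtain ⟨T₀, hT₀⟩ := eventually_atTop.1 (hev.and (eventually_ge_atTop 1))
  have hstep : ∀ u : ℝ, max T₀ 1 ≤ u → n (u - 1) ≤ Real.exp (-κ) * n u := by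
    intro u hu
    have h1 := (hT₀ u (le_trans (le_max_left _ _) hu)).1
    have hu0 : 0 < n u := hn.2.2.2.1 u (lt_of_lt_of_le zero_lt_one (le_trans (le_max_right _ _) hu))
    rw [div_le_iff₀ hu0] at h1
    linarith [h1]
  obtain ⟨T₁, hT₁⟩ := eventually_atTop.1 (A1.lower hn hδlim hκδ)
  set T : ℝ := max (max T₀ 1) T₁ with hT
  have hT1 : 1 ≤ T := le_trans (le_max_right _ _) (le_max_left _ _)
  set C : ℝ := max (n T) (Real.exp κ) with hC
  refine ⟨C, lt_of_lt_of_le (Real.exp_pos κ) (le_max_right _ _), T, hT1, ?_⟩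
  intro t ht s hs
  have hnt : Real.exp (κ * t) ≤ n t := hT₁ t (le_trans (le_max_right _ _) ht)
  have hnt0 : 0 < n t := lt_of_lt_of_le (Real.exp_pos _) hnt
  rcases le_or_gt s t with hst | hst
  · rcases le_or_gt (t - s) T with hcase | hcase
    · -- middle range : use monotonicity up to T
      have h1 : n (t - s) ≤ n T := A1.mono hn hcase
      have h2 : (1 : ℝ) ≤ Real.exp (-(κ * s)) * n t := by
        have ha : Real.exp (-(κ * s)) * Real.exp (κ * t) ≤ Real.exp (-(κ * s)) * n t :=
          mul_le_mul_of_nonneg_left hnt (Real.exp_nonneg _)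
        have hb : (1 : ℝ) ≤ Real.exp (-(κ * s)) * Real.exp (κ * t) := by
          rw [← Real.exp_add]
          exact Real.one_le_exp (by nlinarith [mul_nonneg hκ0.le (sub_nonneg.2 hst)])
        linarith
      calc n (t - s) ≤ n T := h1
        _ = n T * 1 := by ring
        _ ≤ n T * (Real.exp (-(κ * s)) * n t) :=
            mul_le_mul_of_nonneg_left h2 (A1.nonneg hn T)
        _ ≤ C * (Real.exp (-(κ * s)) * n t) :=
            mul_le_mul_of_nonneg_right (le_max_left _ _) (by positivity)
        _ = C * Real.exp (-(κ * s)) * n t := by ring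
    · -- far range : use the step lemma
      set k : ℕ := ⌊s⌋₊ with hk
      have hks : (k : ℝ) ≤ s := Nat.floor_le hs
      have hsk : s < (k : ℝ) + 1 := Nat.lt_floor_add_one s
      have hstep2 : n (t - k) ≤ Real.exp (-(κ * k)) * n t := by
        refine A1.step hn hstep k t ?_
        have : max T₀ 1 ≤ T := le_max_left _ _
        linarith
      have h1 : n (t - s) ≤ n (t - k) := A1.mono hn (by linarith)
      have h2 : Real.exp (-(κ * k)) ≤ Real.exp κ * Real.exp (-(κ * s)) := by
        rw [← Real.exp_add, Real.exp_le_exp]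
        nlinarith
      calc n (t - s) ≤ Real.exp (-(κ * k)) * n t := le_trans h1 hstep2
        _ ≤ (Real.exp κ * Real.exp (-(κ * s))) * n t :=
            mul_le_mul_of_nonneg_right h2 hnt0.le
        _ ≤ C * Real.exp (-(κ * s)) * n t :=
            mul_le_mul_of_nonneg_right
              (mul_le_mul_of_nonneg_right (le_max_right _ _) (Real.exp_nonneg _)) hnt0.le
  · -- s > t : left side is zero
    rw [hn.1 (t - s) (by linarith)]
    have : 0 < C := lt_of_lt_of_le (Real.exp_pos κ) (le_max_right _ _)
    positivity

lemma A1.exp_int {c : ℝ} (hc : 0 < c) :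
    ∫ s in Ioi (0:ℝ), Real.exp (-c * s) = 1 / c := by
  have hderiv : ∀ x ∈ Ici (0:ℝ), HasDerivAt (fun s : ℝ => -(1 / c) * Real.exp (-c * s))
      (Real.exp (-c * x)) x := by
    intro x _
    have h1 : HasDerivAt (fun s : ℝ => -c * s) (-c) x := by
      simpa using (hasDerivAt_id x).const_mul (-c)
    have h2 := (Real.hasDerivAt_exp (-c * x)).comp x h1
    have h3 := h2.const_mul (-(1 / c))
    exact h3.congr_deriv (by field_simp [hc.ne'])
  have hint : IntegrableOn (fun s : ℝ => Real.exp (-c * s)) (Ioi (0:ℝ)) :=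
    exp_neg_integrableOn_Ioi 0 hc
  have htend : Tendsto (fun s : ℝ => -(1 / c) * Real.exp (-c * s)) atTop (nhds 0) := by
    have h1 : Tendsto (fun s : ℝ => -c * s) atTop atBot :=
      Tendsto.const_mul_atTop_of_neg (neg_neg_iff_pos.mpr hc) tendsto_id
    have h2 := Real.tendsto_exp_atBot.comp h1
    have := h2.const_mul (-(1 / c))
    simpa using this
  have := MeasureTheory.integral_Ioi_of_hasDerivAt_of_tendsto' hderiv hint htend
  rw [this]
  simp

lemma A1.main {n : ℝ → ℝ} {δ : ℝ} (hn : Assumption1 n)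
    (hδlim : Tendsto (fun t : ℝ => Real.log (n t) / t) atTop (nhds δ))
    {μ : ℝ} (hμ0 : 0 ≤ μ) (hμδ : μ < δ) :
    Tendsto (fun t : ℝ => (∫ τ in (0:ℝ)..t, n τ * Real.exp (μ * (t - τ))) / n t)
      atTop (nhds (1 / (δ - μ))) := by
  set κ : ℝ := (μ + δ) / 2 with hκ
  have hκμ : μ < κ := by rw [hκ]; linarith
  have hκδ : κ < δ := by rw [hκ]; linarith
  have hκ0 : 0 < κ := by linarith
  obtain ⟨C, hC, T, hT1, hdom⟩ := A1.dom hn hδlim hκ0 hκδ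
  set F : ℝ → ℝ → ℝ := fun t s => n (t - s) / n t * Real.exp (μ * s) with hF
  set f : ℝ → ℝ := fun s => Real.exp (-(δ - μ) * s) with hf
  have hmeas : Measurable n := (A1.mono hn).measurable
  have key : Tendsto (fun t : ℝ => ∫ s in Ioi (0:ℝ), F t s) atTop
      (nhds (∫ s in Ioi (0:ℝ), f s)) := by
    apply MeasureTheory.tendsto_integral_filter_of_dominated_convergence
      (fun s => C * Real.exp (-(κ - μ) * s))
    · filter_upwards with t
      exact (((hmeas.comp (measurable_const.sub measurable_id)).div_const (n t)).mul
        (Real.measurable_exp.comp (measurable_const.mul measurable_id))).aestronglyMeasurable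
    · filter_upwards [eventually_ge_atTop T] with t ht
      rw [MeasureTheory.ae_restrict_iff' measurableSet_Ioi]
      filter_upwards with s hs
      have hnt0 : 0 < n t := hn.2.2.2.1 t (by linarith)
      have hd := hdom t ht s (le_of_lt hs)
      have hF0 : 0 ≤ F t s := by
        apply mul_nonneg (div_nonneg (A1.nonneg hn _) hnt0.le) (Real.exp_nonneg _)
      rw [Real.norm_eq_abs, abs_of_nonneg hF0]
      have h1 : n (t - s) / n t ≤ C * Real.exp (-(κ * s)) := by
        rw [div_le_iff₀ hnt0]
        exact hd
      calc F t s ≤ C * Real.exp (-(κ * s)) * Real.exp (μ * s) :=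
            mul_le_mul_of_nonneg_right h1 (Real.exp_nonneg _)
        _ = C * Real.exp (-(κ - μ) * s) := by
            rw [mul_assoc, ← Real.exp_add]; ring_nf
    · exact (exp_neg_integrableOn_Ioi 0 (by linarith : (0:ℝ) < κ - μ)).const_mul C
    · rw [MeasureTheory.ae_restrict_iff' measurableSet_Ioi]
      filter_upwards with s hs
      have h1 := (A1.ratio hn hδlim (le_of_lt hs)).mul_const (Real.exp (μ * s))
      have h2 : Real.exp (-(δ * s)) * Real.exp (μ * s) = f s := by
        simp only [hf]
        rw [← Real.exp_add]
        congr 1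
        ring
      rw [h2] at h1
      exact h1
  have hval : ∫ s in Ioi (0:ℝ), f s = 1 / (δ - μ) := A1.exp_int (by linarith)
  rw [hval] at key
  refine key.congr' ?_
  filter_upwards [eventually_gt_atTop 0] with t ht
  have hnt0 : 0 < n t := hn.2.2.2.1 t ht
  have e1 : ∫ s in Ioi (0:ℝ), F t s = ∫ s in Ioc (0:ℝ) t, F t s := by
    rw [show ∫ s in Ioc (0:ℝ) t, F t s = ∫ s in Ioi (0:ℝ) ∩ Ioc (0:ℝ) t, F t s by
      rw [Set.inter_eq_self_of_subset_right Set.Ioc_subset_Ioi_self]]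
    rw [← MeasureTheory.setIntegral_indicator measurableSet_Ioc]
    refine MeasureTheory.setIntegral_congr_fun measurableSet_Ioi ?_
    intro s hs
    by_cases hst : s ≤ t
    · rw [Set.indicator_of_mem (show s ∈ Set.Ioc 0 t from ⟨hs, hst⟩)]
    · push_neg at hst
      rw [Set.indicator_of_notMem (fun h => hst.not_ge h.2)]
      simp only [hF]
      rw [hn.1 (t - s) (by linarith)]
      simp
  have e2 : ∫ s in Ioc (0:ℝ) t, F t s = ∫ s in (0:ℝ)..t, F t s :=
    (intervalIntegral.integral_of_le ht.le).symm
  have e3 : ∫ s in (0:ℝ)..t, F t s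
      = (∫ s in (0:ℝ)..t, n (t - s) * Real.exp (μ * s)) / n t := by
    rw [← intervalIntegral.integral_div]
    refine intervalIntegral.integral_congr fun s _ => ?_
    simp only [hF]
    ring
  have e4 : ∫ s in (0:ℝ)..t, n (t - s) * Real.exp (μ * s)
      = ∫ τ in (0:ℝ)..t, n τ * Real.exp (μ * (t - τ)) := by
    have h5 := intervalIntegral.integral_comp_sub_left (a := (0:ℝ)) (b := t)
      (fun τ => n τ * Real.exp (μ * (t - τ))) t
    simp only [sub_self, sub_zero] at h5
    rw [← h5]
    refine intervalIntegral.integral_congr fun s _ => ?_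
    rw [sub_sub_cancel]
  rw [e1, e2, e3, e4]

lemma div_div_div_aux (a b c : ℝ) (hc : c ≠ 0) : (a / c) / (b / c) = a / b := by
  rcases eq_or_ne b 0 with rfl | hb
  · simp
  · field_simp

/-- If `δ* > λ = 1 − β`, the mean clone size
`E(Y_t) = e^{λt} (∫_0^t n_τ e^{−λτ} dτ)/(∫_0^t n_τ dτ)` converges to `δ*/(δ*−λ)`. -/
theorem mean_clone_size_limit_fit
    (β : ℝ) (hβ : β ∈ Set.Ico (0 : ℝ) 1)
    (n : ℝ → ℝ) (hn : Assumption1 n) (δ : ℝ)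
    (hδlim : Filter.Tendsto (fun t : ℝ => Real.log (n t) / t) Filter.atTop (nhds δ))
    (hδ : 1 - β < δ) :
    Filter.Tendsto
      (fun t : ℝ =>
        Real.exp ((1 - β) * t) * (∫ τ in (0:ℝ)..t, n τ * Real.exp (-(1 - β) * τ)) /
          (∫ τ in (0:ℝ)..t, n τ))
      Filter.atTop (nhds (δ / (δ - (1 - β)))) := by
  have hβ1 : β < 1 := hβ.2
  have hlam : (0:ℝ) < 1 - β := by linarith
  have hδ0 : 0 < δ := by linarith
  have hB : Tendsto (fun t : ℝ => (∫ τ in (0:ℝ)..t, n τ * Real.exp ((1 - β) * (t - τ))) / n t)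
      atTop (nhds (1 / (δ - (1 - β)))) := A1.main hn hδlim hlam.le hδ
  have hA0 : Tendsto (fun t : ℝ => (∫ τ in (0:ℝ)..t, n τ * Real.exp (0 * (t - τ))) / n t)
      atTop (nhds (1 / (δ - 0))) := A1.main hn hδlim le_rfl hδ0
  have hA : Tendsto (fun t : ℝ => (∫ τ in (0:ℝ)..t, n τ) / n t) atTop (nhds (1 / δ)) := by
    rw [sub_zero] at hA0
    refine hA0.congr fun t => ?_
    congr 1
    refine intervalIntegral.integral_congr fun τ _ => ?_
    simp
  have h1δ : (1 : ℝ) / δ ≠ 0 := by positivity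
  have hdiv := hB.div hA h1δ
  have hlimval : (1 / (δ - (1 - β))) / (1 / δ) = δ / (δ - (1 - β)) := by
    have h2 : δ - (1 - β) ≠ 0 := by linarith
    field_simp
  rw [hlimval] at hdiv
  refine hdiv.congr' ?_
  filter_upwards [eventually_gt_atTop 0] with t ht
  have hnt0 : 0 < n t := hn.2.2.2.1 t ht
  have hnum : (∫ τ in (0:ℝ)..t, n τ * Real.exp ((1 - β) * (t - τ)))
      = Real.exp ((1 - β) * t) * (∫ τ in (0:ℝ)..t, n τ * Real.exp (-(1 - β) * τ)) := by
    rw [← intervalIntegral.integral_const_mul]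
    refine intervalIntegral.integral_congr fun τ _ => ?_
    rw [mul_left_comm, ← Real.exp_add]
    congr 2
    ring
  simp only [Pi.div_apply]
  rw [hnum, div_div_div_aux _ _ _ hnt0.ne']
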